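/- Let n ≥ 3, let ℓ > 0 and α ≥ (n−2)ℓ, and set S = αIₙ + ℓ𝟙ₙ𝟙ₙᵀ. Let P be an n×n signless Laplacian matrix and suppose N is an n×n matrix with (S + tP)⁻¹ → N as t → ∞. Then: (i) for all i ≠ j with P_{ij} = 1, the i-th and j-th columns of N are negatives of each other, i.e., N_{ki} = −N_{kj} for all k; and (ii) for every i with P_{ii} = 2 + Σ_{j≠i} P_{ij}, the i-th column of N is zero. -/

import Mathlib

open Matrix Finset Filter

section Aux

variable {n : ℕ}

lemma quadP (P : Matrix (Fin n) (Fin n) ℝ) (hPsym : P.IsSymm) (x : Fin n → ℝ) :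
    x ⬝ᵥ P *ᵥ x = (∑ i, (P i i - ∑ j ∈ Finset.univ.erase i, P i j) * x i ^ 2)
      + (1/2) * ∑ i, ∑ j ∈ Finset.univ.erase i, P i j * (x i + x j) ^ 2 := by
  have hsym : ∀ i j, P j i = P i j := fun i j => by
    conv_lhs => rw [← hPsym]
    rfl
  have hBB : ∑ i, ∑ j, P i j * x j ^ 2 = ∑ i, ∑ j, P i j * x i ^ 2 := by
    rw [Finset.sum_comm]
    exact Finset.sum_congr rfl fun i _ => Finset.sum_congr rfl fun j _ => by rw [hsym]
  have hC : ∑ i, ∑ j, P i j * (x i + x j) ^ 2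
      = 2 * (∑ i, ∑ j, P i j * x i ^ 2) + 2 * ∑ i, ∑ j, x i * (P i j * x j) := by
    have h : ∀ i j : Fin n, P i j * (x i + x j) ^ 2
        = P i j * x i ^ 2 + P i j * x j ^ 2 + 2 * (x i * (P i j * x j)) := fun i j => by ring
    simp_rw [h, Finset.sum_add_distrib, hBB, ← Finset.mul_sum]
    ring
  have hlhs : x ⬝ᵥ P *ᵥ x = ∑ i, ∑ j, x i * (P i j * x j) := by
    simp [dotProduct, mulVec, Finset.mul_sum]
  have h1 : ∀ i : Fin n, ∑ j ∈ Finset.univ.erase i, P i j = (∑ j, P i j) - P i i :=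
    fun i => Finset.sum_erase_eq_sub (Finset.mem_univ i)
  have h2 : ∀ i : Fin n, ∑ j ∈ Finset.univ.erase i, P i j * (x i + x j) ^ 2
      = (∑ j, P i j * (x i + x j) ^ 2) - P i i * (x i + x i) ^ 2 :=
    fun i => Finset.sum_erase_eq_sub (Finset.mem_univ i)
  rw [hlhs]
  simp_rw [h1, h2]
  have e1 : ∑ i, (P i i - ((∑ j, P i j) - P i i)) * x i ^ 2
      = 2 * (∑ i, P i i * x i ^ 2) - ∑ i, ∑ j, P i j * x i ^ 2 := by
    have h : ∀ i : Fin n, (P i i - ((∑ j, P i j) - P i i)) * x i ^ 2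
        = 2 * (P i i * x i ^ 2) - ∑ j, P i j * x i ^ 2 := by
      intro i
      rw [← Finset.sum_mul]
      ring
    simp_rw [h, Finset.sum_sub_distrib, ← Finset.mul_sum]
  have e2 : ∑ i, ((∑ j, P i j * (x i + x j) ^ 2) - P i i * (x i + x i) ^ 2)
      = (∑ i, ∑ j, P i j * (x i + x j) ^ 2) - 4 * ∑ i, P i i * x i ^ 2 := by
    rw [Finset.sum_sub_distrib]
    congr 1
    have h : ∀ i : Fin n, P i i * (x i + x i) ^ 2 = 4 * (P i i * x i ^ 2) :=
      fun i => by ring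
    simp_rw [h, ← Finset.mul_sum]
  rw [e1, e2]
  linarith [hC]

lemma mem_range_of_dot_ker (P : Matrix (Fin n) (Fin n) ℝ)
    (hPsym : P.IsSymm) (x : Fin n → ℝ)
    (hx : ∀ z : Fin n → ℝ, P *ᵥ z = 0 → x ⬝ᵥ z = 0) : ∃ y, P *ᵥ y = x := by
  have hherm : P.conjTranspose = P := by
    ext i j
    simp only [conjTranspose_apply, RCLike.star_def, starRingEnd_apply, star_trivial]
    conv_rhs => rw [← hPsym]
    rfl
  set T := Matrix.toEuclideanLin P with hT
  have hadj : LinearMap.adjoint T = T := by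
    rw [hT, ← Matrix.toEuclideanLin_conjTranspose_eq_adjoint, hherm]
  set K := LinearMap.ker T
  have hle : LinearMap.range T ≤ Kᗮ := by
    rintro v ⟨u, rfl⟩
    rw [Submodule.mem_orthogonal]
    intro w hw
    have : T w = 0 := hw
    calc inner ℝ w (T u) = inner ℝ (LinearMap.adjoint T w) u := (LinearMap.adjoint_inner_left T u w).symm
    _ = (0:ℝ) := by rw [hadj, this]; simp
  have hrank : LinearMap.range T = Kᗮ := by
    apply Submodule.eq_of_le_of_finrank_eq hle
    have r1 : Module.finrank ℝ (LinearMap.range T) + Module.finrank ℝ K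
        = Module.finrank ℝ (EuclideanSpace ℝ (Fin n)) :=
      LinearMap.finrank_range_add_finrank_ker T
    have r2 : Module.finrank ℝ K + Module.finrank ℝ Kᗮ
        = Module.finrank ℝ (EuclideanSpace ℝ (Fin n)) :=
      Submodule.finrank_add_finrank_orthogonal K
    omega
  have hxmem : (WithLp.equiv 2 (Fin n → ℝ)).symm x ∈ Kᗮ := by
    rw [Submodule.mem_orthogonal]
    intro w hw
    have hw0 : T w = 0 := hw
    have hker : P *ᵥ (WithLp.equiv 2 (Fin n → ℝ)) w = 0 := by
      have := congrArg (WithLp.equiv 2 (Fin n → ℝ)) hw0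
      exact this
    have := hx _ hker
    rw [real_inner_comm]
    simpa [EuclideanSpace.inner_eq_star_dotProduct, dotProduct, mul_comm] using this
  rw [← hrank] at hxmem
  obtain ⟨y, hy⟩ := hxmem
  refine ⟨(WithLp.equiv 2 (Fin n → ℝ)) y, ?_⟩
  have := congrArg (WithLp.equiv 2 (Fin n → ℝ)) hy
  exact this

lemma csPSD {A : Matrix (Fin n) (Fin n) ℝ} (hA : A.PosSemidef)
    (hAsym : Aᵀ = A) (y u : Fin n → ℝ) :
    (y ⬝ᵥ A *ᵥ u) ^ 2 ≤ (y ⬝ᵥ A *ᵥ y) * (u ⬝ᵥ A *ᵥ u) := by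
  have hswap : ∀ v w : Fin n → ℝ, v ⬝ᵥ A *ᵥ w = w ⬝ᵥ A *ᵥ v := by
    intro v w
    rw [Matrix.dotProduct_mulVec, ← Matrix.mulVec_transpose, hAsym, dotProduct_comm]
  have hq : ∀ s : ℝ, 0 ≤ (u ⬝ᵥ A *ᵥ u) * (s * s) + (2 * (y ⬝ᵥ A *ᵥ u)) * s
      + (y ⬝ᵥ A *ᵥ y) := by
    intro s
    have h0 := hA.dotProduct_mulVec_nonneg (y + s • u)
    simp only [star_trivial, mulVec_add, mulVec_smul, dotProduct_add, add_dotProduct,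
      dotProduct_smul, smul_dotProduct, smul_eq_mul] at h0
    rw [hswap u y] at h0
    ring_nf at h0 ⊢
    linarith [h0]
  have hd := discrim_le_zero hq
  rw [discrim] at hd
  nlinarith [hd]

end Aux

theorem limit_matrix_column_relations
    (n : ℕ) (hn : 3 ≤ n) (ℓ α : ℝ) (hℓ : 0 < ℓ) (hα : ((n : ℝ) - 2) * ℓ ≤ α)
    (S : Matrix (Fin n) (Fin n) ℝ)
    (hS : S = α • (1 : Matrix (Fin n) (Fin n) ℝ) +
      ℓ • Matrix.of (fun _ _ => (1 : ℝ)))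
    (P : Matrix (Fin n) (Fin n) ℝ) (hPsym : P.IsSymm)
    (hP01 : ∀ i j, i ≠ j → P i j = 0 ∨ P i j = 1)
    (hPΔ : ∀ i, P i i - ∑ j ∈ Finset.univ.erase i, P i j = 0 ∨
      P i i - ∑ j ∈ Finset.univ.erase i, P i j = 2)
    (N : Matrix (Fin n) (Fin n) ℝ)
    (hN : Filter.Tendsto (fun t : ℝ => (S + t • P)⁻¹) Filter.atTop (nhds N)) :
    (∀ i j, i ≠ j → P i j = 1 → ∀ k, N k i = -N k j) ∧
    (∀ i, P i i = 2 + ∑ j ∈ Finset.univ.erase i, P i j → ∀ k, N k i = 0) := by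
  -- basic facts
  have hn3 : (3:ℝ) ≤ (n:ℝ) := by exact_mod_cast hn
  have hα0 : 0 < α := lt_of_lt_of_le (by nlinarith) hα
  -- S is symmetric
  have hSt : Sᵀ = S := by
    rw [hS]
    ext i j
    simp [transpose_apply, one_apply, eq_comm]
  -- S is positive definite
  have hSmv : ∀ x : Fin n → ℝ, ∀ i, (S *ᵥ x) i = α * x i + ℓ * ∑ j, x j := by
    intro x i
    rw [hS]
    simp [mulVec, dotProduct, one_apply, mul_add, Finset.sum_add_distrib, mul_ite, mul_zero,
      Finset.sum_ite_eq, Finset.mul_sum, mul_comm]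
  have hSquad : ∀ x : Fin n → ℝ, x ⬝ᵥ S *ᵥ x = α * ∑ i, x i ^ 2 + ℓ * (∑ i, x i) ^ 2 := by
    intro x
    simp only [dotProduct]
    rw [Finset.sum_congr rfl (fun i _ => by rw [hSmv x i]; ring :
      ∀ i ∈ Finset.univ, x i * (S *ᵥ x) i = α * x i ^ 2 + (ℓ * ∑ j, x j) * x i)]
    rw [Finset.sum_add_distrib, ← Finset.mul_sum, ← Finset.mul_sum]
    ring
  have hSpd : S.PosDef := by
    rw [posDef_iff_dotProduct_mulVec]
    constructor
    · show Sᴴ = S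
      ext i j
      simp only [conjTranspose_apply, star_trivial]
      conv_lhs => rw [← hSt]
      rfl
    · intro x hx
      rw [star_trivial, hSquad]
      have hsq : 0 < ∑ i, x i ^ 2 := by
        have hne : ∃ i, x i ≠ 0 := by
          by_contra h
          push_neg at h
          exact hx (funext h)
        obtain ⟨i, hi⟩ := hne
        apply Finset.sum_pos' (fun j _ => sq_nonneg _)
        exact ⟨i, Finset.mem_univ i, by positivity⟩
      nlinarith [sq_nonneg (∑ i, x i)]
  -- P is positive semidefinite
  have hPΔ0 : ∀ i, 0 ≤ P i i - ∑ j ∈ Finset.univ.erase i, P i j := by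
    intro i
    rcases hPΔ i with h | h <;> rw [h] <;> norm_num
  have hPij0 : ∀ i j, i ≠ j → 0 ≤ P i j := by
    intro i j hij
    rcases hP01 i j hij with h | h <;> rw [h] <;> norm_num
  have hquad_nonneg : ∀ x : Fin n → ℝ,
      0 ≤ ∑ i, (P i i - ∑ j ∈ Finset.univ.erase i, P i j) * x i ^ 2 ∧
      0 ≤ ∑ i, ∑ j ∈ Finset.univ.erase i, P i j * (x i + x j) ^ 2 := by
    intro x
    constructor
    · exact Finset.sum_nonneg fun i _ => mul_nonneg (hPΔ0 i) (sq_nonneg _)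
    · refine Finset.sum_nonneg fun i _ => Finset.sum_nonneg fun j hj => ?_
      exact mul_nonneg (hPij0 i j (Ne.symm (Finset.mem_erase.mp hj).1)) (sq_nonneg _)
  have hPpsd : P.PosSemidef := by
    rw [posSemidef_iff_dotProduct_mulVec]
    constructor
    · show Pᴴ = P
      ext i j
      simp only [conjTranspose_apply, star_trivial]
      conv_lhs => rw [← hPsym]
      rfl
    · intro x
      rw [star_trivial, quadP P hPsym x]
      obtain ⟨ha, hb⟩ := hquad_nonneg x
      linarith
  have hPt : Pᵀ = P := hPsym
  -- kernel structure of P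
  have hker : ∀ z : Fin n → ℝ, P *ᵥ z = 0 →
      (∀ i, (P i i - ∑ j ∈ Finset.univ.erase i, P i j) * z i ^ 2 = 0) ∧
      (∀ i j, j ≠ i → P i j * (z i + z j) ^ 2 = 0) := by
    intro z hz
    have h0 : z ⬝ᵥ P *ᵥ z = 0 := by rw [hz, dotProduct_zero]
    rw [quadP P hPsym z] at h0
    obtain ⟨ha, hb⟩ := hquad_nonneg z
    have hA0 : ∑ i, (P i i - ∑ j ∈ Finset.univ.erase i, P i j) * z i ^ 2 = 0 := by linarith
    have hB0 : ∑ i, ∑ j ∈ Finset.univ.erase i, P i j * (z i + z j) ^ 2 = 0 := by linarith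
    constructor
    · intro i
      exact (Finset.sum_eq_zero_iff_of_nonneg
        (fun i _ => mul_nonneg (hPΔ0 i) (sq_nonneg _))).mp hA0 i (Finset.mem_univ i)
    · intro i j hji
      have houter := (Finset.sum_eq_zero_iff_of_nonneg
        (fun i _ => Finset.sum_nonneg fun j hj =>
          mul_nonneg (hPij0 i j (Ne.symm (Finset.mem_erase.mp hj).1)) (sq_nonneg _))).mp hB0
        i (Finset.mem_univ i)
      exact (Finset.sum_eq_zero_iff_of_nonneg
        (fun j hj => mul_nonneg (hPij0 i j (Ne.symm (Finset.mem_erase.mp hj).1))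
          (sq_nonneg _))).mp houter j (Finset.mem_erase.mpr ⟨hji, Finset.mem_univ j⟩)
  -- positive definiteness of S + t P for t ≥ 0
  have hMpd : ∀ t : ℝ, 0 ≤ t → (S + t • P).PosDef := by
    intro t ht
    apply Matrix.PosDef.add_posSemidef hSpd
    rw [posSemidef_iff_dotProduct_mulVec]
    constructor
    · show (t • P)ᴴ = t • P
      ext i j
      simp only [conjTranspose_apply, star_trivial, Matrix.smul_apply, smul_eq_mul]
      conv_lhs => rw [← hPsym]
      rfl
    · intro x
      rw [star_trivial]
      have : (t • P) *ᵥ x = t • (P *ᵥ x) := by rw [smul_mulVec]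
      rw [this, dotProduct_smul, smul_eq_mul]
      exact mul_nonneg ht (by simpa using hPpsd.dotProduct_mulVec_nonneg x)
  -- (S + t P) symmetric and so is its inverse
  have hMt : ∀ t : ℝ, (S + t • P)ᵀ = S + t • P := by
    intro t
    rw [transpose_add, transpose_smul, hSt, hPt]
  have hMinvT : ∀ t : ℝ, ((S + t • P)⁻¹)ᵀ = (S + t • P)⁻¹ := by
    intro t
    rw [Matrix.transpose_nonsing_inv, hMt]
  -- N is symmetric
  have hNt : Nᵀ = N := by
    have hcont : Continuous fun A : Matrix (Fin n) (Fin n) ℝ => Aᵀ :=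
      continuous_id.matrix_transpose
    have h1 : Tendsto (fun t : ℝ => ((S + t • P)⁻¹)ᵀ) atTop (nhds Nᵀ) :=
      (hcont.tendsto N).comp hN
    simp only [hMinvT] at h1
    exact tendsto_nhds_unique h1 hN
  -- continuity of the quadratic evaluation
  have hcontQ : ∀ x : Fin n → ℝ, Continuous fun A : Matrix (Fin n) (Fin n) ℝ => x ⬝ᵥ A *ᵥ x := by
    intro x
    have h1 : Continuous fun A : Matrix (Fin n) (Fin n) ℝ => A *ᵥ x :=
      continuous_id.matrix_mulVec continuous_const
    exact continuous_finset_sum _ fun i _ =>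
      continuous_const.mul ((continuous_apply i).comp h1)
  have hlimQ : ∀ x : Fin n → ℝ,
      Tendsto (fun t : ℝ => x ⬝ᵥ (S + t • P)⁻¹ *ᵥ x) atTop (nhds (x ⬝ᵥ N *ᵥ x)) :=
    fun x => ((hcontQ x).tendsto N).comp hN
  -- N is PSD
  have hNpsd : N.PosSemidef := by
    rw [posSemidef_iff_dotProduct_mulVec]
    constructor
    · show Nᴴ = N
      ext i j
      simp only [conjTranspose_apply, star_trivial]
      conv_lhs => rw [← hNt]
      rfl
    · intro x
      rw [star_trivial]
      refine ge_of_tendsto (hlimQ x) ?_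
      filter_upwards [eventually_ge_atTop (0:ℝ)] with t ht
      exact by simpa using ((hMpd t ht).inv.posSemidef).dotProduct_mulVec_nonneg x
  -- the key vanishing lemma
  have hmain : ∀ x : Fin n → ℝ, (∀ z : Fin n → ℝ, P *ᵥ z = 0 → x ⬝ᵥ z = 0) → N *ᵥ x = 0 := by
    intro x hxker
    obtain ⟨y, hy⟩ := mem_range_of_dot_ker P hPsym x hxker
    set c := y ⬝ᵥ P *ᵥ y with hc
    have hc0 : 0 ≤ c := by simpa using hPpsd.dotProduct_mulVec_nonneg y
    have hbound : ∀ t : ℝ, 1 ≤ t →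
        x ⬝ᵥ (S + t • P)⁻¹ *ᵥ x ≤ c / t := by
      intro t ht
      have ht0 : 0 < t := lt_of_lt_of_le one_pos ht
      have hpd := hMpd t ht0.le
      set A := S + t • P with hA
      have hAinv : A * A⁻¹ = 1 :=
        Matrix.mul_nonsing_inv _ ((Matrix.isUnit_iff_isUnit_det _).mp hpd.isUnit)
      set u := A⁻¹ *ᵥ x with hu
      have hAu : A *ᵥ u = x := by
        rw [hu, Matrix.mulVec_mulVec, hAinv, Matrix.one_mulVec]
      have hq0 : 0 ≤ x ⬝ᵥ A⁻¹ *ᵥ x := by simpa using hpd.inv.posSemidef.dotProduct_mulVec_nonneg x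
      set q := x ⬝ᵥ A⁻¹ *ᵥ x with hqdef
      have huAu : u ⬝ᵥ A *ᵥ u = q := by
        rw [hAu, hqdef, dotProduct_comm]
      have hsplit : u ⬝ᵥ A *ᵥ u = u ⬝ᵥ S *ᵥ u + t * (u ⬝ᵥ P *ᵥ u) := by
        rw [hA, add_mulVec, dotProduct_add, smul_mulVec, dotProduct_smul, smul_eq_mul]
      have hS0 : 0 ≤ u ⬝ᵥ S *ᵥ u := by simpa using hSpd.posSemidef.dotProduct_mulVec_nonneg u
      have hPu0 : 0 ≤ u ⬝ᵥ P *ᵥ u := by simpa using hPpsd.dotProduct_mulVec_nonneg u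
      have hPu : t * (u ⬝ᵥ P *ᵥ u) ≤ q := by
        rw [hsplit] at huAu
        linarith
      have hq_expr : q = y ⬝ᵥ P *ᵥ u := by
        have : x ⬝ᵥ u = (P *ᵥ y) ⬝ᵥ u := by rw [hy]
        rw [hqdef, ← hu]  -- q = x ⬝ᵥ u  (u = A⁻¹ *ᵥ x)
        rw [this, dotProduct_comm, Matrix.dotProduct_mulVec, ← Matrix.mulVec_transpose, hPt,
          dotProduct_comm]
      have hcs := csPSD hPpsd hPt y u
      rw [← hq_expr, ← hc] at hcs
      have huPu : u ⬝ᵥ P *ᵥ u ≤ q / t := (le_div_iff₀ ht0).mpr (by linarith)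
      rcases eq_or_lt_of_le hq0 with h | h
      · rw [← h]
        positivity
      · have h2 : q ^ 2 ≤ (c / t) * q := by
          calc q ^ 2 ≤ c * (u ⬝ᵥ P *ᵥ u) := hcs
          _ ≤ c * (q / t) := by exact mul_le_mul_of_nonneg_left huPu hc0
          _ = (c / t) * q := by ring
        have := (mul_le_mul_iff_left₀ h).mp (by nlinarith : q * q ≤ (c / t) * q)
        exact this
    have hlim2 : Tendsto (fun t : ℝ => c / t) atTop (nhds 0) :=
      Tendsto.div_atTop tendsto_const_nhds tendsto_id
    have hle : x ⬝ᵥ N *ᵥ x ≤ 0 := by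
      refine le_of_tendsto_of_tendsto (hlimQ x) hlim2 ?_
      filter_upwards [eventually_ge_atTop (1:ℝ)] with t ht
      exact hbound t ht
    have hge : 0 ≤ x ⬝ᵥ N *ᵥ x := by simpa using hNpsd.dotProduct_mulVec_nonneg x
    have hzero : x ⬝ᵥ N *ᵥ x = 0 := le_antisymm hle hge
    exact (hNpsd.dotProduct_mulVec_zero_iff x).mp (by simpa using hzero)
  constructor
  · intro i j hij hPij k
    have hx : N *ᵥ (Pi.single i 1 + Pi.single j 1) = 0 := by
      apply hmain
      intro z hz
      have hterm := (hker z hz).2 i j (Ne.symm hij)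
      rw [hPij, one_mul] at hterm
      have hzij : z i + z j = 0 := by
        have := sq_eq_zero_iff.mp hterm
        linarith [this]
      rw [add_dotProduct, single_dotProduct, single_dotProduct, one_mul, one_mul]
      linarith
    have := congrFun hx k
    simp only [mulVec_add, Pi.add_apply, Matrix.mulVec_single, Pi.zero_apply, Pi.smul_apply,
      MulOpposite.smul_eq_mul_unop, MulOpposite.unop_op, Matrix.col_apply] at this
    have h1 : N k i * 1 + N k j * 1 = 0 := this
    linarith
  · intro i hloop k
    have hx : N *ᵥ (Pi.single i 1) = 0 := by
      apply hmain
      intro z hz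
      have hterm := (hker z hz).1 i
      have hΔ : P i i - ∑ j ∈ Finset.univ.erase i, P i j = 2 := by linarith [hloop]
      rw [hΔ] at hterm
      have hzi : z i = 0 := by
        have : z i ^ 2 = 0 := by linarith
        exact pow_eq_zero_iff (by norm_num) |>.mp this
      rw [single_dotProduct, one_mul, hzi]
    have := congrFun hx k
    simp only [Matrix.mulVec_single, Pi.zero_apply, Pi.smul_apply,
      MulOpposite.smul_eq_mul_unop, MulOpposite.unop_op, Matrix.col_apply] at this
    linarith [this]
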